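/- Let N and p be positive integers with p ≤ N, and let μ be a probability measure on the space of real N×p matrices that is supported on the Stiefel manifold {U : UᵀU = Iₚ}. Define M = ∫ U Uᵀ dμ(U) (an entrywise/Bochner integral, which exists since U ↦ UUᵀ is bounded on the Stiefel manifold), and let λ₁ ≥ ⋯ ≥ λ_N be the eigenvalues of the symmetric matrix M. Then: (i) for every real N×p matrix Û with orthonormal columns, ∫ ‖ÛÛᵀ − UUᵀ‖_F² dμ(U) = 2p − 2 tr(Ûᵀ M Û); and (ii) the infimum of ∫ ‖ÛÛᵀ − UUᵀ‖_F² dμ(U) over all N×p matrices Û with orthonormal columns equals 2p − 2∑_{k=1}^{p} λₖ, and is attained when the columns of Û are p orthonormal eigenvectors of M associated with its p largest eigenvalues. -/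

import Mathlib

open Matrix MeasureTheory



lemma MMSD.trace_mul_apply' {N : ℕ} (A B : Matrix (Fin N) (Fin N) ℝ) :
    Matrix.trace (A * B) = ∑ i, ∑ j, A i j * B j i := by
  simp [Matrix.trace, Matrix.mul_apply, Matrix.diag]

lemma MMSD.ptwise {N p : ℕ} (Uh : Matrix (Fin N) (Fin p) ℝ) (hU : Uhᵀ * Uh = 1)
    (V : Matrix (Fin N) (Fin p) ℝ) (hV : Vᵀ * V = 1) :
    Matrix.trace ((Uh * Uhᵀ - V * Vᵀ)ᵀ * (Uh * Uhᵀ - V * Vᵀ))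
      = 2 * (p:ℝ) - 2 * Matrix.trace (Uh * Uhᵀ * (V * Vᵀ)) := by
  have hAt : (Uh * Uhᵀ)ᵀ = Uh * Uhᵀ := by simp [transpose_mul]
  have hBt : (V * Vᵀ)ᵀ = V * Vᵀ := by simp [transpose_mul]
  have hA2 : (Uh * Uhᵀ) * (Uh * Uhᵀ) = Uh * Uhᵀ := by
    rw [Matrix.mul_assoc, ← Matrix.mul_assoc Uhᵀ Uh Uhᵀ, hU, Matrix.one_mul]
  have hB2 : (V * Vᵀ) * (V * Vᵀ) = V * Vᵀ := by
    rw [Matrix.mul_assoc, ← Matrix.mul_assoc Vᵀ V Vᵀ, hV, Matrix.one_mul]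
  have hTrA : Matrix.trace (Uh * Uhᵀ) = (p : ℝ) := by
    rw [Matrix.trace_mul_comm, hU, Matrix.trace_one]; simp
  have hTrB : Matrix.trace (V * Vᵀ) = (p : ℝ) := by
    rw [Matrix.trace_mul_comm, hV, Matrix.trace_one]; simp
  rw [transpose_sub, hAt, hBt, sub_mul, mul_sub, mul_sub, hA2, hB2]
  rw [Matrix.trace_sub, Matrix.trace_sub, Matrix.trace_sub, hTrA, hTrB]
  rw [Matrix.trace_mul_comm (V * Vᵀ) (Uh * Uhᵀ)]
  ring

lemma MMSD.part1 {N p : ℕ} (μ : Measure (Fin N → Fin p → ℝ)) [IsProbabilityMeasure μ]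
    (hsupp : ∀ᵐ V ∂μ, (Matrix.of V)ᵀ * Matrix.of V = 1)
    (hint : ∀ i j : Fin N, Integrable (fun V => (Matrix.of V * (Matrix.of V)ᵀ) i j) μ)
    (M : Matrix (Fin N) (Fin N) ℝ)
    (hMdef : ∀ i j, M i j = ∫ V, (Matrix.of V * (Matrix.of V)ᵀ) i j ∂μ)
    (Uh : Matrix (Fin N) (Fin p) ℝ) (hU : Uhᵀ * Uh = 1) :
    ∫ V, Matrix.trace ((Uh * Uhᵀ - Matrix.of V * (Matrix.of V)ᵀ)ᵀ *
          (Uh * Uhᵀ - Matrix.of V * (Matrix.of V)ᵀ)) ∂μ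
      = 2 * (p : ℝ) - 2 * Matrix.trace (Uhᵀ * M * Uh) := by
  set A := Uh * Uhᵀ with hA
  have step1 : ∫ V, Matrix.trace ((Uh * Uhᵀ - Matrix.of V * (Matrix.of V)ᵀ)ᵀ *
          (Uh * Uhᵀ - Matrix.of V * (Matrix.of V)ᵀ)) ∂μ
      = ∫ V, (2 * (p:ℝ) - 2 * ∑ i, ∑ j, A i j * (Matrix.of V * (Matrix.of V)ᵀ) j i) ∂μ := by
    refine integral_congr_ae (hsupp.mono fun V hV => ?_)
    dsimp only
    rw [MMSD.ptwise Uh hU _ hV, MMSD.trace_mul_apply']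
  rw [step1]
  have hint' : Integrable (fun V => ∑ i, ∑ j, A i j * (Matrix.of V * (Matrix.of V)ᵀ) j i) μ :=
    integrable_finset_sum _ fun i _ => integrable_finset_sum _ fun j _ => (hint j i).const_mul _
  rw [integral_sub (integrable_const _) (hint'.const_mul 2), integral_const]
  simp only [measure_univ, probReal_univ, smul_eq_mul, one_mul]
  congr 1
  rw [integral_const_mul, integral_finset_sum (f := fun i (V : Fin N → Fin p → ℝ) => ∑ j, A i j * (Matrix.of V * (Matrix.of V)ᵀ) j i) _ fun i _ =>
      integrable_finset_sum _ fun j _ => (hint j i).const_mul _]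
  congr 1
  have : ∀ i ∈ Finset.univ, (∫ V, ∑ j, A i j * (Matrix.of V * (Matrix.of V)ᵀ) j i ∂μ)
      = ∑ j, A i j * M j i := by
    intro i _
    rw [integral_finset_sum _ fun j _ => (hint j i).const_mul _]
    refine Finset.sum_congr rfl fun j _ => ?_
    rw [integral_const_mul, ← hMdef]
  rw [Finset.sum_congr rfl this]
  have : Matrix.trace (Uhᵀ * M * Uh) = Matrix.trace (A * M) := by
    rw [Matrix.trace_mul_comm, ← Matrix.mul_assoc, hA]
  rw [this, MMSD.trace_mul_apply']

lemma MMSD.sum_castLE {N p : ℕ} (hpN : p ≤ N) (f : Fin N → ℝ) :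
    ∑ k : Fin p, f (Fin.castLE hpN k)
      = ∑ i ∈ Finset.univ.filter (fun i : Fin N => (i : ℕ) < p), f i := by
  have h : (Finset.univ.map ⟨Fin.castLE hpN, Fin.castLE_injective hpN⟩)
      = Finset.univ.filter (fun i : Fin N => (i : ℕ) < p) := by
    ext i
    simp only [Finset.mem_map, Finset.mem_univ, true_and, Finset.mem_filter,
      Function.Embedding.coeFn_mk]
    constructor
    · rintro ⟨k, rfl⟩; exact k.isLt
    · intro hi; exact ⟨⟨(i : ℕ), hi⟩, by ext; simp⟩
  rw [← h, Finset.sum_map]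
  rfl

lemma MMSD.kyfan_scalar {N p : ℕ} (hpN : p ≤ N) (hp : 0 < p) (lam c : Fin N → ℝ)
    (hsort : Antitone lam) (hc0 : ∀ i, 0 ≤ c i) (hc1 : ∀ i, c i ≤ 1)
    (hsum : ∑ i, c i = p) :
    ∑ i, lam i * c i ≤ ∑ k : Fin p, lam (Fin.castLE hpN k) := by
  classical
  set F := Finset.univ.filter (fun i : Fin N => (i : ℕ) < p) with hF
  have hpm1 : p - 1 < N := lt_of_lt_of_le (Nat.pred_lt hp.ne') hpN
  set t := lam ⟨p - 1, hpm1⟩ with ht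
  have hcard : ∑ i ∈ F, (1 : ℝ) = p := by
    have := MMSD.sum_castLE hpN (fun _ => (1 : ℝ))
    simpa using this.symm
  have hsplitc : ∑ i ∈ F, c i + ∑ i ∈ Finset.univ.filter (fun i : Fin N => ¬((i : ℕ) < p)), c i
      = (p : ℝ) := by
    rw [Finset.sum_filter_add_sum_filter_not]; exact hsum
  have h1 : ∀ i ∈ F, lam i * c i ≤ lam i + t * (c i - 1) := by
    intro i hi
    have hip : (i : ℕ) < p := (Finset.mem_filter.mp hi).2
    have hle : i ≤ (⟨p - 1, hpm1⟩ : Fin N) := by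
      rw [Fin.le_def]; simp; omega
    have htle : t ≤ lam i := hsort hle
    nlinarith [mul_nonneg (sub_nonneg.2 htle) (sub_nonneg.2 (hc1 i))]
  have h2 : ∀ i ∈ Finset.univ.filter (fun i : Fin N => ¬((i : ℕ) < p)),
      lam i * c i ≤ t * c i := by
    intro i hi
    have hip : ¬((i : ℕ) < p) := (Finset.mem_filter.mp hi).2
    have hle : (⟨p - 1, hpm1⟩ : Fin N) ≤ i := by
      rw [Fin.le_def]; simp; omega
    have htge : lam i ≤ t := hsort hle
    nlinarith [mul_nonneg (sub_nonneg.2 htge) (hc0 i)]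
  have key : ∑ i, lam i * c i ≤ ∑ i ∈ F, (lam i + t * (c i - 1))
      + ∑ i ∈ Finset.univ.filter (fun i : Fin N => ¬((i : ℕ) < p)), t * c i := by
    rw [← Finset.sum_filter_add_sum_filter_not Finset.univ (fun i : Fin N => (i : ℕ) < p)
      (fun i => lam i * c i)]
    exact add_le_add (Finset.sum_le_sum h1) (Finset.sum_le_sum h2)
  rw [MMSD.sum_castLE hpN lam]
  have e1 : ∑ i ∈ F, (lam i + t * (c i - 1))
      = ∑ i ∈ F, lam i + t * ∑ i ∈ F, c i - t * ∑ i ∈ F, (1 : ℝ) := by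
    have h2' : ∑ i ∈ F, t * (c i - 1) = t * ∑ i ∈ F, c i - t * ∑ i ∈ F, (1 : ℝ) := by
      calc ∑ i ∈ F, t * (c i - 1) = ∑ i ∈ F, (t * c i - t * 1) :=
            Finset.sum_congr rfl fun i _ => by ring
        _ = ∑ i ∈ F, t * c i - ∑ i ∈ F, t * 1 := Finset.sum_sub_distrib _ _
        _ = t * ∑ i ∈ F, c i - t * ∑ i ∈ F, (1 : ℝ) := by
            rw [← Finset.mul_sum, ← Finset.mul_sum]
    rw [Finset.sum_add_distrib, h2']
    ring
  have e2 : ∑ i ∈ Finset.univ.filter (fun i : Fin N => ¬((i : ℕ) < p)), t * c i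
      = t * ∑ i ∈ Finset.univ.filter (fun i : Fin N => ¬((i : ℕ) < p)), c i :=
    (Finset.mul_sum _ _ _).symm
  rw [e1, e2, hcard] at key
  have : t * ∑ i ∈ F, c i
      + t * ∑ i ∈ Finset.univ.filter (fun i : Fin N => ¬((i : ℕ) < p)), c i = t * p := by
    rw [← mul_add, hsplitc]
  linarith

lemma MMSD.kyfan' {N p : ℕ} (hpN : p ≤ N) (hp : 0 < p)
    (M W : Matrix (Fin N) (Fin N) ℝ) (ev : Fin N → ℝ)
    (hWW' : W * Wᵀ = 1) (hW'W : Wᵀ * W = 1)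
    (hspec : M = W * Matrix.diagonal ev * Wᵀ)
    (lam : Fin N → ℝ) (hsort : Antitone lam)
    (e : Equiv.Perm (Fin N)) (he : lam = ev ∘ e)
    (Uh : Matrix (Fin N) (Fin p) ℝ) (hU : Uhᵀ * Uh = 1) :
    Matrix.trace (Uhᵀ * M * Uh) ≤ ∑ k : Fin p, lam (Fin.castLE hpN k) := by
  classical
  set B : Matrix (Fin N) (Fin p) ℝ := Wᵀ * Uh with hBdef
  set c : Fin N → ℝ := fun i => ∑ k, B i k * B i k with hcdef
  have hc0 : ∀ i, 0 ≤ c i := fun i => Finset.sum_nonneg fun k _ => mul_self_nonneg _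
  have hBB : B * Bᵀ = Wᵀ * (Uh * Uhᵀ) * W := by
    rw [hBdef, Matrix.transpose_mul, Matrix.transpose_transpose]
    rw [Matrix.mul_assoc, Matrix.mul_assoc, Matrix.mul_assoc]
  have hBBdiag : ∀ i, (B * Bᵀ) i i = c i := by
    intro i
    rw [Matrix.mul_apply]
    exact Finset.sum_congr rfl fun k _ => by rw [Matrix.transpose_apply]
  have hc1 : ∀ i, c i ≤ 1 := by
    intro i
    set Q : Matrix (Fin N) (Fin N) ℝ := Uh * Uhᵀ with hQ
    have hQ2 : Q * Q = Q := by
      rw [hQ, Matrix.mul_assoc, ← Matrix.mul_assoc Uhᵀ Uh Uhᵀ, hU, Matrix.one_mul]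
    have hQt : Qᵀ = Q := by rw [hQ]; simp [transpose_mul]
    set C : Matrix (Fin N) (Fin N) ℝ := (1 - Q) * W with hC
    have hCC : Cᵀ * C = Wᵀ * (1 - Q) * W := by
      rw [hC, Matrix.transpose_mul, Matrix.transpose_sub, Matrix.transpose_one, hQt]
      rw [Matrix.mul_assoc, ← Matrix.mul_assoc (1 - Q) (1 - Q) W]
      have : (1 - Q) * (1 - Q) = 1 - Q := by
        rw [Matrix.sub_mul, Matrix.mul_sub, Matrix.mul_sub, hQ2]
        simp
      rw [this, ← Matrix.mul_assoc]
    have hpos : 0 ≤ (Cᵀ * C) i i := by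
      rw [Matrix.mul_apply]
      exact Finset.sum_nonneg fun k _ => by
        rw [Matrix.transpose_apply]; exact mul_self_nonneg _
    have hsplit : (Wᵀ * (1 - Q) * W) i i = 1 - (B * Bᵀ) i i := by
      rw [Matrix.mul_sub, Matrix.sub_mul, Matrix.mul_one, hW'W, hBB]
      simp [Matrix.sub_apply]
    rw [hCC, hsplit, hBBdiag] at hpos
    linarith
  have hsum : ∑ i, c i = (p : ℝ) := by
    have h1 : ∑ i, c i = Matrix.trace (B * Bᵀ) := by
      rw [Matrix.trace]
      exact (Finset.sum_congr rfl fun i _ => (hBBdiag i)).symm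
    have h2 : Matrix.trace (B * Bᵀ) = Matrix.trace (Bᵀ * B) := Matrix.trace_mul_comm _ _
    have h3 : Bᵀ * B = (1 : Matrix (Fin p) (Fin p) ℝ) := by
      rw [hBdef, Matrix.transpose_mul, Matrix.transpose_transpose, Matrix.mul_assoc,
        ← Matrix.mul_assoc W Wᵀ Uh, hWW', Matrix.one_mul, hU]
    rw [h1, h2, h3, Matrix.trace_one]
    simp
  have htr : Matrix.trace (Uhᵀ * M * Uh) = ∑ i, ev i * c i := by
    have h1 : Uhᵀ * M * Uh = Bᵀ * (Matrix.diagonal ev * B) := by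
      rw [hspec, hBdef, Matrix.transpose_mul, Matrix.transpose_transpose]
      rw [Matrix.mul_assoc, Matrix.mul_assoc, Matrix.mul_assoc, Matrix.mul_assoc]
    rw [h1, Matrix.trace_mul_comm, Matrix.mul_assoc, MMSD.trace_mul_apply']
    refine Finset.sum_congr rfl fun i _ => ?_
    have hterm : ∀ j, Matrix.diagonal ev i j * (B * Bᵀ) j i
        = if j = i then ev i * c i else 0 := by
      intro j
      by_cases h : j = i
      · subst h; simp [Matrix.diagonal_apply_eq, hBBdiag]
      · simp [Matrix.diagonal_apply_ne _ (Ne.symm h), h]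
    rw [Finset.sum_congr rfl fun j _ => hterm j]
    simp
  rw [htr]
  have hre : ∑ i, ev i * c i = ∑ i, lam i * (c ∘ e) i := by
    rw [he]
    exact (Equiv.sum_comp e (fun i => ev i * c i)).symm
  rw [hre]
  exact MMSD.kyfan_scalar hpN hp lam (c ∘ e) hsort (fun i => hc0 _) (fun i => hc1 _)
    (by simpa [Function.comp] using (Equiv.sum_comp e c).trans hsum)

lemma MMSD.exW {N : ℕ} (M : Matrix (Fin N) (Fin N) ℝ) (hM : M.IsHermitian) :
    ∃ W : Matrix (Fin N) (Fin N) ℝ, W * Wᵀ = 1 ∧ Wᵀ * W = 1 ∧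
      M = W * Matrix.diagonal hM.eigenvalues * Wᵀ ∧
      (∀ j, M.mulVec (fun i => W i j) = hM.eigenvalues j • fun i => W i j) := by
  refine ⟨hM.eigenvectorUnitary, ?_, ?_, ?_, ?_⟩
  · simpa [Matrix.star_eq_conjTranspose] using
      (Matrix.mem_unitaryGroup_iff).mp hM.eigenvectorUnitary.2
  · simpa [Matrix.star_eq_conjTranspose] using
      (Matrix.mem_unitaryGroup_iff').mp hM.eigenvectorUnitary.2
  · simpa [Matrix.star_eq_conjTranspose] using hM.spectral_theorem
  · intro j
    have h := hM.mulVec_eigenvectorBasis j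
    have hcol : (fun i => (hM.eigenvectorUnitary : Matrix (Fin N) (Fin N) ℝ) i j)
        = ⇑(hM.eigenvectorBasis j) := by
      funext i; exact Matrix.IsHermitian.eigenvectorUnitary_apply hM i j
    rw [hcol]
    exact h

lemma MMSD.trace_of_eig {N p : ℕ} (hpN : p ≤ N)
    (M : Matrix (Fin N) (Fin N) ℝ) (lam : Fin N → ℝ)
    (Uh : Matrix (Fin N) (Fin p) ℝ) (hU : Uhᵀ * Uh = 1)
    (heig : ∀ k : Fin p, M.mulVec (fun i => Uh i k)
      = lam (Fin.castLE hpN k) • fun i => Uh i k) :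
    Matrix.trace (Uhᵀ * M * Uh) = ∑ k : Fin p, lam (Fin.castLE hpN k) := by
  rw [Matrix.trace]
  refine Finset.sum_congr rfl fun k _ => ?_
  have hMU : ∀ i, (M * Uh) i k = lam (Fin.castLE hpN k) * Uh i k := by
    intro i
    have := congrFun (heig k) i
    simpa [Matrix.mulVec, dotProduct, Matrix.mul_apply] using this
  have hdiag : (Uhᵀ * Uh) k k = 1 := by
    rw [hU]; simp [Matrix.one_apply]
  calc (Uhᵀ * M * Uh).diag k = ∑ i, Uhᵀ k i * (M * Uh) i k := by
        rw [Matrix.diag, Matrix.mul_assoc, Matrix.mul_apply]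
    _ = ∑ i, lam (Fin.castLE hpN k) * (Uhᵀ k i * Uh i k) := by
        refine Finset.sum_congr rfl fun i _ => ?_
        rw [hMU i]; ring
    _ = lam (Fin.castLE hpN k) * (Uhᵀ * Uh) k k := by
        rw [← Finset.mul_sum, Matrix.mul_apply]
    _ = lam (Fin.castLE hpN k) := by rw [hdiag, mul_one]


/-- For a probability measure `μ` supported on the Stiefel manifold, with
`M = ∫ U Uᵀ dμ` (entrywise) and sorted eigenvalues `λ₁ ≥ ⋯ ≥ λ_N` of `M`:
(i) `∫ ‖ÛÛᵀ − UUᵀ‖_F² dμ = 2p − 2 tr(Ûᵀ M Û)` for every `Û` with orthonormal columns;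
(ii) the infimum of this quantity over such `Û` equals `2p − 2∑_{k≤p} λₖ`, attained when
the columns of `Û` are `p` orthonormal eigenvectors of `M` for its `p` largest
eigenvalues. -/
theorem stmt_4 (N p : ℕ) (hN : 0 < N) (hp : 0 < p) (hpN : p ≤ N)
    (μ : Measure (Fin N → Fin p → ℝ)) [IsProbabilityMeasure μ]
    (hsupp : ∀ᵐ V ∂μ, (Matrix.of V)ᵀ * Matrix.of V = 1)
    (hint : ∀ i j : Fin N,
      Integrable (fun V => (Matrix.of V * (Matrix.of V)ᵀ) i j) μ)
    (hint2 : ∀ Uh : Matrix (Fin N) (Fin p) ℝ, Integrable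
      (fun V => Matrix.trace ((Uh * Uhᵀ - Matrix.of V * (Matrix.of V)ᵀ)ᵀ *
        (Uh * Uhᵀ - Matrix.of V * (Matrix.of V)ᵀ))) μ)
    (M : Matrix (Fin N) (Fin N) ℝ)
    (hMdef : ∀ i j, M i j = ∫ V, (Matrix.of V * (Matrix.of V)ᵀ) i j ∂μ)
    (hM : M.IsHermitian)
    (lam : Fin N → ℝ) (hsort : Antitone lam)
    (hperm : ∃ e : Equiv.Perm (Fin N), lam = hM.eigenvalues ∘ e) :
    (∀ Uh : Matrix (Fin N) (Fin p) ℝ, Uhᵀ * Uh = 1 →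
      ∫ V, Matrix.trace ((Uh * Uhᵀ - Matrix.of V * (Matrix.of V)ᵀ)ᵀ *
          (Uh * Uhᵀ - Matrix.of V * (Matrix.of V)ᵀ)) ∂μ
        = 2 * (p : ℝ) - 2 * Matrix.trace (Uhᵀ * M * Uh)) ∧
    sInf {t : ℝ | ∃ Uh : Matrix (Fin N) (Fin p) ℝ, Uhᵀ * Uh = 1 ∧
        t = ∫ V, Matrix.trace ((Uh * Uhᵀ - Matrix.of V * (Matrix.of V)ᵀ)ᵀ *
          (Uh * Uhᵀ - Matrix.of V * (Matrix.of V)ᵀ)) ∂μ}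
      = 2 * (p : ℝ) - 2 * ∑ k : Fin p, lam (Fin.castLE hpN k) ∧
    (∀ Uh : Matrix (Fin N) (Fin p) ℝ, Uhᵀ * Uh = 1 →
      (∀ k : Fin p, M.mulVec (fun i => Uh i k) = lam (Fin.castLE hpN k) • fun i => Uh i k) →
      ∫ V, Matrix.trace ((Uh * Uhᵀ - Matrix.of V * (Matrix.of V)ᵀ)ᵀ *
          (Uh * Uhᵀ - Matrix.of V * (Matrix.of V)ᵀ)) ∂μ
        = 2 * (p : ℝ) - 2 * ∑ k : Fin p, lam (Fin.castLE hpN k)) := by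
  classical
  obtain ⟨e, he⟩ := hperm
  obtain ⟨W, hWW', hW'W, hspec, hWcol⟩ := MMSD.exW M hM
  -- part (i)
  have part_i : ∀ Uh : Matrix (Fin N) (Fin p) ℝ, Uhᵀ * Uh = 1 →
      ∫ V, Matrix.trace ((Uh * Uhᵀ - Matrix.of V * (Matrix.of V)ᵀ)ᵀ *
          (Uh * Uhᵀ - Matrix.of V * (Matrix.of V)ᵀ)) ∂μ
        = 2 * (p : ℝ) - 2 * Matrix.trace (Uhᵀ * M * Uh) :=
    fun Uh hU => MMSD.part1 μ hsupp hint M hMdef Uh hU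
  -- part (iii)
  have part_iii : ∀ Uh : Matrix (Fin N) (Fin p) ℝ, Uhᵀ * Uh = 1 →
      (∀ k : Fin p, M.mulVec (fun i => Uh i k) = lam (Fin.castLE hpN k) • fun i => Uh i k) →
      ∫ V, Matrix.trace ((Uh * Uhᵀ - Matrix.of V * (Matrix.of V)ᵀ)ᵀ *
          (Uh * Uhᵀ - Matrix.of V * (Matrix.of V)ᵀ)) ∂μ
        = 2 * (p : ℝ) - 2 * ∑ k : Fin p, lam (Fin.castLE hpN k) := by
    intro Uh hU heig
    rw [part_i Uh hU, MMSD.trace_of_eig hpN M lam Uh hU heig]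
  refine ⟨part_i, ?_, part_iii⟩
  -- Ky Fan bound
  have kyfanM : ∀ Uh : Matrix (Fin N) (Fin p) ℝ, Uhᵀ * Uh = 1 →
      Matrix.trace (Uhᵀ * M * Uh) ≤ ∑ k : Fin p, lam (Fin.castLE hpN k) :=
    fun Uh hU => MMSD.kyfan' hpN hp M W hM.eigenvalues hWW' hW'W hspec lam hsort e he Uh hU
  -- the optimal Uh
  set Uh₀ : Matrix (Fin N) (Fin p) ℝ :=
    Matrix.of (fun i k => W i (e (Fin.castLE hpN k))) with hUh₀
  have hU₀ : Uh₀ᵀ * Uh₀ = 1 := by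
    ext k l
    rw [Matrix.mul_apply]
    have : ∑ i, Uh₀ᵀ k i * Uh₀ i l = (Wᵀ * W) (e (Fin.castLE hpN k)) (e (Fin.castLE hpN l)) := by
      rw [Matrix.mul_apply]
      exact Finset.sum_congr rfl fun i _ => rfl
    rw [this, hW'W]
    by_cases h : k = l
    · subst h; simp [Matrix.one_apply]
    · have hne : e (Fin.castLE hpN k) ≠ e (Fin.castLE hpN l) := by
        intro hcontra
        exact h (Fin.castLE_injective hpN (e.injective hcontra))
      simp [Matrix.one_apply, hne, h]
  have heig₀ : ∀ k : Fin p, M.mulVec (fun i => Uh₀ i k)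
      = lam (Fin.castLE hpN k) • fun i => Uh₀ i k := by
    intro k
    have : (fun i => Uh₀ i k) = (fun i => W i (e (Fin.castLE hpN k))) := rfl
    rw [this, he]
    exact hWcol (e (Fin.castLE hpN k))
  -- infimum
  set v : ℝ := 2 * (p : ℝ) - 2 * ∑ k : Fin p, lam (Fin.castLE hpN k) with hv
  have hmem : v ∈ {t : ℝ | ∃ Uh : Matrix (Fin N) (Fin p) ℝ, Uhᵀ * Uh = 1 ∧
      t = ∫ V, Matrix.trace ((Uh * Uhᵀ - Matrix.of V * (Matrix.of V)ᵀ)ᵀ *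
        (Uh * Uhᵀ - Matrix.of V * (Matrix.of V)ᵀ)) ∂μ} :=
    ⟨Uh₀, hU₀, (part_iii Uh₀ hU₀ heig₀).symm⟩
  have hlb : ∀ t ∈ {t : ℝ | ∃ Uh : Matrix (Fin N) (Fin p) ℝ, Uhᵀ * Uh = 1 ∧
      t = ∫ V, Matrix.trace ((Uh * Uhᵀ - Matrix.of V * (Matrix.of V)ᵀ)ᵀ *
        (Uh * Uhᵀ - Matrix.of V * (Matrix.of V)ᵀ)) ∂μ}, v ≤ t := by
    rintro t ⟨Uh, hU, rfl⟩
    rw [part_i Uh hU]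
    have := kyfanM Uh hU
    rw [hv]
    linarith
  exact le_antisymm (csInf_le ⟨v, hlb⟩ hmem) (le_csInf ⟨v, hmem⟩ hlb)
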